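/- arXiv:1309.0643 — 3 statements merged into one kernel-verified Lean document; each statement's English description precedes it below -/
import Mathlib

section
/- Let G and H be two connected graphs each with at least two vertices, and let v, x, y be vertices of H with x ≠ v and y ≠ v. For every vertex a of G, the vertices (a,x) and (a,y) are mutually maximally distant in the rooted product graph G∘_v H if and only if x and y are mutually maximally distant in H. -/
namespace RootedStrong

variable {V : Type*}

/-- `u` is maximally distant from `v`: every neighbor `w` of `u` satisfies `d(v,w) ≤ d(u,v)`. -/
def MaxDistant (G : SimpleGraph V) (u v : V) : Prop :=
  ∀ w, G.Adj u w → G.dist v w ≤ G.dist u v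

/-- `u` and `v` are mutually maximally distant. -/
def MMD (G : SimpleGraph V) (u v : V) : Prop :=
  MaxDistant G u v ∧ MaxDistant G v u

/-- The boundary `∂(G)` of a graph. -/
def boundary (G : SimpleGraph V) : Set V := {u | ∃ v, MMD G u v}

/-- A vertex is simplicial if its neighborhood induces a complete graph. -/
def Simplicial (G : SimpleGraph V) (u : V) : Prop :=
  ∀ x ∈ G.neighborSet u, ∀ y ∈ G.neighborSet u, x ≠ y → G.Adj x y

/-- The set `σ(G)` of simplicial vertices. -/
def simplicialSet (G : SimpleGraph V) : Set V := {u | Simplicial G u}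

/-- `w` strongly resolves `u` and `v`. -/
def StronglyResolves (G : SimpleGraph V) (w u v : V) : Prop :=
  G.dist w u = G.dist w v + G.dist v u ∨ G.dist w v = G.dist w u + G.dist u v

/-- A set of vertices is a strong metric generator if every pair of distinct vertices is
strongly resolved by some of its elements. -/
def IsStrongGenerator (G : SimpleGraph V) (S : Set V) : Prop :=
  ∀ u v : V, u ≠ v → ∃ w ∈ S, StronglyResolves G w u v

/-- The strong metric dimension of a graph. -/
noncomputable def sdim (G : SimpleGraph V) [Fintype V] : ℕ :=
  sInf {n | ∃ S : Finset V, S.card = n ∧ IsStrongGenerator G (S : Set V)}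

/-- A strong metric basis: a strong metric generator of minimum cardinality. -/
def IsStrongBasis (G : SimpleGraph V) [Fintype V] (S : Finset V) : Prop :=
  IsStrongGenerator G (S : Set V) ∧ S.card = sdim G

/-- The rooted product graph `G ∘_v H`. -/
def rootedProd {α β : Type*} (G : SimpleGraph α) (H : SimpleGraph β) (v : β) :
    SimpleGraph (α × β) where
  Adj p q := (p.1 = q.1 ∧ H.Adj p.2 q.2) ∨ (p.2 = v ∧ q.2 = v ∧ G.Adj p.1 q.1)
  symm := by
    constructor
    rintro ⟨a, x⟩ ⟨b, y⟩ (⟨h1, h2⟩ | ⟨h1, h2, h3⟩)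
    · exact Or.inl ⟨h1.symm, h2.symm⟩
    · exact Or.inr ⟨h2, h1, h3.symm⟩
  loopless := by
    constructor
    rintro ⟨a, x⟩ (⟨_, h2⟩ | ⟨_, _, h3⟩)
    · exact H.irrefl h2
    · exact G.irrefl h3

/-- Two distinct vertices are true twins if they have equal closed neighborhoods. -/
def TrueTwins (G : SimpleGraph V) (x y : V) : Prop :=
  x ≠ y ∧ ∀ z, (z = x ∨ G.Adj x z) ↔ (z = y ∨ G.Adj y z)

/-- A twin-free clique: a clique containing no pair of true twins. -/
def IsTwinFreeClique (G : SimpleGraph V) (X : Set V) : Prop :=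
  (∀ x ∈ X, ∀ y ∈ X, x ≠ y → G.Adj x y) ∧ ∀ x ∈ X, ∀ y ∈ X, ¬ TrueTwins G x y

/-- The twin-free clique number `ϖ(G)`. -/
noncomputable def twinFreeCliqueNum (G : SimpleGraph V) : ℕ :=
  sSup {n | ∃ X : Set V, IsTwinFreeClique G X ∧ X.ncard = n}



open SimpleGraph in
def copyHom {α β : Type*} (G : SimpleGraph α) (H : SimpleGraph β) (v : β) (a : α) :
    H →g rootedProd G H v :=
  ⟨fun z => (a, z), fun h => Or.inl ⟨rfl, h⟩⟩

open SimpleGraph in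
lemma proj_walk {α β : Type*} {G : SimpleGraph α} {H : SimpleGraph β} {v : β}
    {p q : α × β} (W : (rootedProd G H v).Walk p q) :
    ∃ W' : H.Walk p.2 q.2, W'.length ≤ W.length := by
  induction W with
  | nil => exact ⟨.nil, le_refl _⟩
  | cons h W ih =>
    obtain ⟨W', hW'⟩ := ih
    rcases h with ⟨h1, h2⟩ | ⟨h1, h2, h3⟩
    · exact ⟨.cons h2 W', by exact Nat.succ_le_succ hW'⟩
    · exact ⟨W'.copy (h2.trans h1.symm) rfl, by
        rw [SimpleGraph.Walk.length_copy]; exact hW'.trans (Nat.le_succ _)⟩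

open SimpleGraph in
lemma dist_copy {α β : Type*} {G : SimpleGraph α} {H : SimpleGraph β} {v : β}
    (hH : H.Connected) (a : α) (z w : β) :
    (rootedProd G H v).dist (a, z) (a, w) = H.dist z w := by
  obtain ⟨W, hW⟩ := hH.exists_walk_length_eq_dist z w
  have h1 : (rootedProd G H v).dist (a, z) (a, w) ≤ H.dist z w := by
    have := SimpleGraph.dist_le (W.map (copyHom G H v a))
    rwa [SimpleGraph.Walk.length_map, hW] at this
  have hr : (rootedProd G H v).Reachable (a, z) (a, w) := ⟨W.map (copyHom G H v a)⟩
  obtain ⟨W2, hW2⟩ := hr.exists_walk_length_eq_dist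
  obtain ⟨W', hW'⟩ := proj_walk W2
  have h2 : H.dist z w ≤ (rootedProd G H v).dist (a, z) (a, w) := by
    calc H.dist z w ≤ W'.length := SimpleGraph.dist_le W'
    _ ≤ W2.length := hW'
    _ = _ := hW2
  omega

lemma adj_copy {α β : Type*} {G : SimpleGraph α} {H : SimpleGraph β} {v : β}
    {a : α} {x : β} (hx : x ≠ v) {p : α × β} (h : (rootedProd G H v).Adj (a, x) p) :
    p.1 = a ∧ H.Adj x p.2 := by
  rcases h with ⟨h1, h2⟩ | ⟨h1, _, _⟩
  · exact ⟨h1.symm, h2⟩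
  · exact absurd h1 hx

lemma maxd_copy {α β : Type*} {G : SimpleGraph α} {H : SimpleGraph β} {v : β}
    (hH : H.Connected) {x y : β} (hx : x ≠ v) (a : α) :
    MaxDistant (rootedProd G H v) (a, x) (a, y) ↔ MaxDistant H x y := by
  constructor
  · intro h w hw
    have := h (a, w) (Or.inl ⟨rfl, hw⟩)
    rwa [dist_copy hH, dist_copy hH] at this
  · intro h p hp
    obtain ⟨h1, h2⟩ := adj_copy hx hp
    have := h p.2 h2
    have hpe : p = (a, p.2) := by cases p; simp_all
    rw [hpe, dist_copy hH, dist_copy hH]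
    exact this

theorem statement1 {α β : Type*} [Fintype α] [Fintype β]
    (G : SimpleGraph α) (H : SimpleGraph β)
    (hG : G.Connected) (hH : H.Connected)
    (hGn : 2 ≤ Fintype.card α) (hHn : 2 ≤ Fintype.card β)
    (v x y : β) (hx : x ≠ v) (hy : y ≠ v) (a : α) :
    MMD (rootedProd G H v) (a, x) (a, y) ↔ MMD H x y := by
  unfold MMD
  rw [maxd_copy hH hx a, maxd_copy hH hy a]

end RootedStrong
end

section
/- Let H be a connected graph, let v be a vertex of H, and let M(v) be the set of vertices of H which are maximally distant from v. Then M(v) ⊆ ∂(H), that is, every vertex maximally distant from v is mutually maximally distant from some vertex of H. -/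
namespace RootedStrong

variable {V : Type*}

theorem statement2 {β : Type*} [Fintype β] (H : SimpleGraph β) (hH : H.Connected)
    (v u : β) (hu : MaxDistant H u v) : u ∈ boundary H := by
  classical
  -- consider the finset of vertices from which u is maximally distant
  set S : Finset β := Finset.univ.filter (fun w => MaxDistant H u w) with hS
  have hvS : v ∈ S := by simp [hS, hu]
  obtain ⟨v', hv'S, hmax⟩ := S.exists_max_image (fun w => H.dist u w) ⟨v, hvS⟩
  have hv' : MaxDistant H u v' := by simpa [hS] using hv'S
  refine ⟨v', hv', ?_⟩
  intro w hw
  by_contra hcon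
  push_neg at hcon
  have hd1 : H.dist v' w = 1 := SimpleGraph.dist_eq_one_iff_adj.mpr hw
  have huw : MaxDistant H u w := by
    intro x hx
    have h1 : H.dist w x ≤ H.dist w v' + H.dist v' x := hH.dist_triangle
    have h2 : H.dist v' x ≤ H.dist u v' := hv' x hx
    have h3 : H.dist w v' = 1 := by rw [SimpleGraph.dist_comm]; exact hd1
    have h4 : H.dist v' u < H.dist u w := hcon
    rw [SimpleGraph.dist_comm (G := H) (u := v') (v := u)] at h4
    omega
  have hwS : w ∈ S := by simp [hS, huw]
  have := hmax w hwS
  rw [SimpleGraph.dist_comm (G := H) (u := v') (v := u)] at hcon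
  omega

end RootedStrong
end

section
/- Let G be a connected graph of order n ≥ 2, let T be a tree with at least two vertices having l(T) leaves, and let v be a vertex of T. If v is a leaf of T, then dim_s(G∘_v T) = n(l(T) − 1) − 1, and if v is an inner vertex of T (i.e., not a leaf), then dim_s(G∘_v T) = n·l(T) − 1. -/
namespace RootedStrong

variable {V : Type*}

section Part1

open SimpleGraph Classical

variable {α β : Type*} (G : SimpleGraph α) (T : SimpleGraph β) (v : β)

/-- target distance -/
noncomputable def rdist (p q : α × β) : ℕ :=
  if p.1 = q.1 then T.dist p.2 q.2 else T.dist p.2 v + G.dist p.1 q.1 + T.dist v q.2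

def homT (a : α) : T →g rootedProd G T v := ⟨fun x => (a, x), fun h => Or.inl ⟨rfl, h⟩⟩

def homG : G →g rootedProd G T v := ⟨fun a => (a, v), fun h => Or.inr ⟨rfl, rfl, h⟩⟩

variable {G T v}

lemma rdist_same (a : α) (x y : β) : rdist G T v (a, x) (a, y) = T.dist x y := by
  simp [rdist]

lemma rdist_cross {a b : α} (hab : a ≠ b) (x y : β) :
    rdist G T v (a, x) (b, y) = T.dist x v + G.dist a b + T.dist v y := by
  simp [rdist, hab]

lemma rdist_comm (p q : α × β) : rdist G T v p q = rdist G T v q p := by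
  rcases p with ⟨a, x⟩; rcases q with ⟨b, y⟩
  by_cases h : a = b
  · subst h; simp [rdist, SimpleGraph.dist_comm]
  · simp only [rdist_cross h, rdist_cross (Ne.symm h)]
    rw [SimpleGraph.dist_comm (u := x), SimpleGraph.dist_comm (u := a), SimpleGraph.dist_comm (v := y)]
    omega

variable (hG : G.Connected) (hT : T.IsTree)

include hG hT

lemma rp_dist_le (p q : α × β) : (rootedProd G T v).dist p q ≤ rdist G T v p q := by
  rcases p with ⟨a, x⟩; rcases q with ⟨b, y⟩
  by_cases h : a = b
  · subst h
    obtain ⟨w, hw⟩ := hT.isConnected.exists_walk_length_eq_dist x y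
    have := SimpleGraph.dist_le (w.map (homT G T v a))
    rwa [SimpleGraph.Walk.length_map, hw, ← rdist_same (G := G) (v := v) a x y] at this
  · obtain ⟨w1, hw1⟩ := hT.isConnected.exists_walk_length_eq_dist x v
    obtain ⟨w2, hw2⟩ := hG.exists_walk_length_eq_dist a b
    obtain ⟨w3, hw3⟩ := hT.isConnected.exists_walk_length_eq_dist v y
    have := SimpleGraph.dist_le (((w1.map (homT G T v a)).append
      (w2.map (homG G T v))).append (w3.map (homT G T v b)))
    simp only [homT, homG, RelHom.coeFn_mk] at this
    simp only [SimpleGraph.Walk.length_append, SimpleGraph.Walk.length_map, hw1, hw2, hw3] at this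
    rwa [rdist_cross h]

lemma rp_connected [Nonempty α] : (rootedProd G T v).Connected := by
  rw [SimpleGraph.connected_iff]
  refine ⟨fun p q => ?_, by have := hT.isConnected.nonempty; exact ⟨(Classical.arbitrary α, Classical.arbitrary β)⟩⟩
  rcases p with ⟨a, x⟩; rcases q with ⟨b, y⟩
  obtain ⟨w1⟩ := hT.isConnected.preconnected x v
  obtain ⟨w2⟩ := hG.preconnected a b
  obtain ⟨w3⟩ := hT.isConnected.preconnected v y
  exact ⟨((w1.map (homT G T v a)).append (w2.map (homG G T v))).append (w3.map (homT G T v b))⟩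

lemma rdist_adj (p : α × β) {q r : α × β} (h : (rootedProd G T v).Adj q r) :
    rdist G T v p r ≤ rdist G T v p q + 1 := by
  rcases p with ⟨a, x⟩; rcases q with ⟨b, y⟩; rcases r with ⟨c, z⟩
  have trT : ∀ x y z : β, T.dist x z ≤ T.dist x y + T.dist y z :=
    fun _ _ _ => hT.isConnected.dist_triangle
  have trG : ∀ x y z : α, G.dist x z ≤ G.dist x y + G.dist y z :=
    fun _ _ _ => hG.dist_triangle
  rcases h with ⟨hbc, hyz⟩ | ⟨hyv, hzv, hbc⟩
  · simp only at hbc hyz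
    subst hbc
    have h1 : T.dist y z = 1 := by rwa [SimpleGraph.dist_eq_one_iff_adj]
    by_cases hab : a = b
    · subst hab; rw [rdist_same, rdist_same]
      have := trT x y z; omega
    · rw [rdist_cross hab, rdist_cross hab]
      have h3 := trT v y z
      omega
  · simp only at hyv hzv hbc
    rw [hyv, hzv]
    have h1 : G.dist b c = 1 := by rwa [SimpleGraph.dist_eq_one_iff_adj]
    have hbc' : b ≠ c := hbc.ne
    have hvv : T.dist v v = 0 := SimpleGraph.dist_self
    by_cases hab : a = b
    · subst hab
      have hac : a ≠ c := hbc'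
      rw [rdist_same, rdist_cross hac]
      have h2 : G.dist a c = 1 := h1
      omega
    · by_cases hac : a = c
      · subst hac
        rw [rdist_same, rdist_cross hab]
        omega
      · rw [rdist_cross hab, rdist_cross hac]
        have := trG a b c
        omega

lemma rdist_le_length {q r : α × β} (w : (rootedProd G T v).Walk q r) :
    rdist G T v q r ≤ w.length := by
  induction w with
  | nil => rw [rdist_same]; simp [SimpleGraph.dist_self]
  | @cons q q' r h w ih =>
    rw [SimpleGraph.Walk.length_cons]
    have step : rdist G T v r q ≤ rdist G T v r q' + 1 := rdist_adj hG hT r h.symm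
    have e1 : rdist G T v q r = rdist G T v r q := rdist_comm _ _
    have e2 : rdist G T v q' r = rdist G T v r q' := rdist_comm _ _
    omega

lemma rp_dist_eq [Nonempty α] (p q : α × β) :
    (rootedProd G T v).dist p q = rdist G T v p q := by
  refine le_antisymm (rp_dist_le hG hT p q) ?_
  obtain ⟨w, hw⟩ := (rp_connected hG hT).exists_walk_length_eq_dist p q
  calc rdist G T v p q ≤ w.length := rdist_le_length hG hT w
  _ = _ := hw

lemma rp_dist_same [Nonempty α] (a : α) (x y : β) :
    (rootedProd G T v).dist (a, x) (a, y) = T.dist x y := by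
  rw [rp_dist_eq hG hT, rdist_same]

lemma rp_dist_cross [Nonempty α] {a b : α} (hab : a ≠ b) (x y : β) :
    (rootedProd G T v).dist (a, x) (b, y) = T.dist x v + G.dist a b + T.dist v y := by
  rw [rp_dist_eq hG hT, rdist_cross hab]

end Part1

section TreePart
open SimpleGraph Classical

variable {β : Type*} [Fintype β] {T : SimpleGraph β}

lemma tree_exists_adj (hT : T.IsTree) (hcard : 2 ≤ Fintype.card β) (x : β) :
    ∃ w, T.Adj x w := by
  have : Nontrivial β := Fintype.one_lt_card_iff_nontrivial.mp hcard
  obtain ⟨y, hy⟩ := exists_ne x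
  obtain ⟨w⟩ := hT.isConnected.preconnected x y
  cases w with
  | nil => exact absurd rfl hy.symm
  | cons h _ => exact ⟨_, h⟩

lemma leaf_dist (hT : T.IsTree) {x x' : β} (hx : (T.neighborSet x).ncard = 1)
    (hadj : T.Adj x x') {u : β} (hu : u ≠ x) :
    T.dist u x = T.dist u x' + 1 := by
  obtain ⟨w, hw⟩ := Set.ncard_eq_one.mp hx
  have hx'' : x' = w := by
    have : x' ∈ T.neighborSet x := hadj
    rw [hw] at this; exact this
  rw [← hx''] at hw
  refine le_antisymm ?_ ?_
  · have h1 : T.dist x' x = 1 := SimpleGraph.dist_eq_one_iff_adj.mpr hadj.symm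
    have := hT.isConnected.dist_triangle (u := u) (v := x') (w := x)
    omega
  · obtain ⟨p, hp⟩ := hT.isConnected.exists_walk_length_eq_dist x u
    cases p with
    | nil => exact absurd rfl hu.symm
    | @cons _ s _ h q =>
      have hs : s = x' := by
        have : s ∈ T.neighborSet x := h
        rw [hw] at this; exact this
      have h1 : T.dist x' u ≤ q.length := by rw [← hs]; exact SimpleGraph.dist_le q
      have h2 : q.length + 1 = T.dist x u := hp
      rw [SimpleGraph.dist_comm (u := u) (v := x), SimpleGraph.dist_comm (u := u) (v := x')]
      omega

lemma exists_nbr_farther (hT : T.IsTree) (hcard : 2 ≤ Fintype.card β)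
    {x : β} (hx : (T.neighborSet x).ncard ≠ 1) (y : β) :
    ∃ x', T.Adj x x' ∧ T.dist y x' = T.dist y x + 1 := by
  obtain ⟨w₀, hw₀⟩ := tree_exists_adj hT hcard x
  have hfin : (T.neighborSet x).Finite := Set.toFinite _
  have h2 : 1 < (T.neighborSet x).ncard := by
    have hpos : 0 < (T.neighborSet x).ncard := by
      rw [Set.ncard_pos hfin]; exact ⟨w₀, hw₀⟩
    omega
  obtain ⟨n₁, hn₁, n₂, hn₂, hnn⟩ := (Set.one_lt_ncard hfin).mp h2
  by_cases hxy : y = x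
  · subst hxy
    refine ⟨n₁, hn₁, ?_⟩
    rw [SimpleGraph.dist_self, SimpleGraph.dist_eq_one_iff_adj]
    exact hn₁
  · set d := T.dist y x with hd
    have hdpos : d ≠ 0 := by
      rw [hd, Ne, (hT.isConnected.dist_eq_zero_iff)]
      exact hxy
    obtain ⟨w0, hw0⟩ := hT.isConnected.exists_walk_length_eq_dist y x
    set P := w0.bypass with hPdef
    have hPpath : P.IsPath := w0.bypass_isPath
    have hPlen : P.length = d := le_antisymm (by rw [hd, ← hw0]; exact w0.length_bypass_le) (SimpleGraph.dist_le P)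
    obtain ⟨P₀, _, huniq⟩ := hT.existsUnique_path y x
    have hPP : ∀ Q : T.Walk y x, Q.IsPath → Q = P := by
      intro Q hQ
      exact (huniq Q hQ).trans (huniq P hPpath).symm
    have key : ∀ x', T.Adj x x' → T.dist y x' ≤ d → x' = P.reverse.getVert 1 := by
      intro x' hadj' hle
      obtain ⟨w1, hw1⟩ := hT.isConnected.exists_walk_length_eq_dist y x'
      set q := w1.bypass with hqdef
      have hqpath : q.IsPath := w1.bypass_isPath
      have hqlen : q.length ≤ d := le_trans (le_trans w1.length_bypass_le (le_of_eq hw1)) hle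
      have hxq : x ∉ q.support := by
        intro hmem
        have htpath : (q.takeUntil x hmem).IsPath := hqpath.takeUntil hmem
        have e1 : q.takeUntil x hmem = P := hPP _ htpath
        have hlen1 : (q.takeUntil x hmem).length ≤ q.length := q.length_takeUntil_le hmem
        have hdq : d ≤ q.length := by
          rw [← hPlen, ← e1]; exact hlen1
        have hspec := q.take_spec hmem
        have hlen2 := congrArg SimpleGraph.Walk.length hspec
        rw [SimpleGraph.Walk.length_append] at hlen2
        have h0 : (q.dropUntil x hmem).length = 0 := by
          have : (q.takeUntil x hmem).length = d := by rw [e1, hPlen]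
          omega
        exact hadj'.ne (SimpleGraph.Walk.eq_of_length_eq_zero h0)
      have hrpath : (q.concat hadj'.symm).IsPath := by
        rw [← SimpleGraph.Walk.isPath_reverse_iff, SimpleGraph.Walk.reverse_concat]
        refine SimpleGraph.Walk.IsPath.cons ?_ ?_
        · rwa [SimpleGraph.Walk.isPath_reverse_iff]
        · rwa [SimpleGraph.Walk.support_reverse, List.mem_reverse]
      have e : q.concat hadj'.symm = P := hPP _ hrpath
      have e2 := congrArg (fun W : T.Walk y x => W.reverse.getVert 1) e
      simp only [SimpleGraph.Walk.reverse_concat] at e2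
      rw [← e2, SimpleGraph.Walk.getVert_cons_succ, SimpleGraph.Walk.getVert_zero]
    have hone : ∀ x', T.Adj x x' → T.dist y x' ≤ d + 1 := by
      intro x' hadj'
      have h1 : T.dist x x' = 1 := SimpleGraph.dist_eq_one_iff_adj.mpr hadj'
      have := hT.isConnected.dist_triangle (u := y) (v := x) (w := x')
      omega
    rcases le_or_gt (T.dist y n₁) d with h₁ | h₁
    · rcases le_or_gt (T.dist y n₂) d with h₂ | h₂
      · exact absurd ((key n₁ hn₁ h₁).trans (key n₂ hn₂ h₂).symm) hnn
      · exact ⟨n₂, hn₂, le_antisymm (hone n₂ hn₂) h₂⟩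
    · exact ⟨n₁, hn₁, le_antisymm (hone n₁ hn₁) h₁⟩

lemma exists_leaf_beyond (hT : T.IsTree) (hcard : 2 ≤ Fintype.card β) (y x : β) :
    ∃ l, (T.neighborSet l).ncard = 1 ∧ T.dist y l = T.dist y x + T.dist x l := by
  classical
  set s : Finset β := Finset.univ.filter (fun l => T.dist y l = T.dist y x + T.dist x l) with hs
  have hxs : x ∈ s := by
    simp [hs, SimpleGraph.dist_self]
  obtain ⟨l, hls, hmax⟩ := s.exists_max_image (fun l => T.dist x l) ⟨x, hxs⟩
  have hl : T.dist y l = T.dist y x + T.dist x l := by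
    simpa [hs] using hls
  refine ⟨l, ?_, hl⟩
  by_contra hleaf
  obtain ⟨l', hadj, hl'⟩ := exists_nbr_farther hT hcard hleaf y
  have h1 : T.dist l l' = 1 := SimpleGraph.dist_eq_one_iff_adj.mpr hadj
  have htr1 := hT.isConnected.dist_triangle (u := x) (v := l) (w := l')
  have htr2 := hT.isConnected.dist_triangle (u := y) (v := x) (w := l')
  have hge : T.dist x l + 1 ≤ T.dist x l' := by omega
  have hmem : l' ∈ s := by
    simp only [hs, Finset.mem_filter, Finset.mem_univ, true_and]
    omega
  have := hmax l' hmem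
  omega

lemma exists_leaf_ne (hT : T.IsTree) (hcard : 2 ≤ Fintype.card β) (y : β) :
    ∃ l, (T.neighborSet l).ncard = 1 ∧ l ≠ y := by
  have : Nontrivial β := Fintype.one_lt_card_iff_nontrivial.mp hcard
  obtain ⟨x, hx⟩ := exists_ne y
  obtain ⟨l, hleaf, hl⟩ := exists_leaf_beyond hT hcard y x
  refine ⟨l, hleaf, ?_⟩
  intro h
  rw [h, SimpleGraph.dist_self] at hl
  have : T.dist y x ≠ 0 := by
    rw [Ne, hT.isConnected.dist_eq_zero_iff]
    exact fun he => hx he.symm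
  omega

lemma exists_leaf_beyond' (hT : T.IsTree) (hcard : 2 ≤ Fintype.card β) (v x : β) :
    ∃ l, (T.neighborSet l).ncard = 1 ∧ l ≠ v ∧ T.dist v l = T.dist v x + T.dist x l := by
  by_cases hxv : x = v
  · obtain ⟨l, hl, hlv⟩ := exists_leaf_ne hT hcard v
    exact ⟨l, hl, hlv, by rw [hxv]; simp [SimpleGraph.dist_self]⟩
  · obtain ⟨l, hl, hdl⟩ := exists_leaf_beyond hT hcard v x
    refine ⟨l, hl, ?_, hdl⟩
    intro h
    rw [h, SimpleGraph.dist_self] at hdl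
    have h1 : T.dist x v = T.dist v x := SimpleGraph.dist_comm
    have h2 : T.dist v x ≠ 0 := by
      rw [Ne, hT.isConnected.dist_eq_zero_iff]
      exact fun he => hxv he.symm
    omega

end TreePart

section MainPart
open SimpleGraph Classical

variable {α β : Type*} [Fintype α] [Fintype β]
variable {G : SimpleGraph α} {T : SimpleGraph β} {v : β}

/-- the set of leaves of `T` other than `v`, within each copy -/
noncomputable def leafF (T : SimpleGraph β) (v : β) : Finset β :=
  Finset.univ.filter (fun x => (T.neighborSet x).ncard = 1 ∧ x ≠ v)

noncomputable def LF (α : Type*) [Fintype α] (T : SimpleGraph β) (v : β) : Finset (α × β) :=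
  Finset.univ ×ˢ leafF T v

lemma mem_LF {p : α × β} : p ∈ LF α T v ↔ (T.neighborSet p.2).ncard = 1 ∧ p.2 ≠ v := by
  simp [LF, leafF]

variable (hG : G.Connected) (hT : T.IsTree)
include hG hT

lemma maxd_leaf [Nonempty α] (hcard : 2 ≤ Fintype.card β) {a b : α} {x y : β}
    (hx : (T.neighborSet x).ncard = 1) (hxv : x ≠ v)
    (hne : (a, x) ≠ (b, y)) :
    MaxDistant (rootedProd G T v) (a, x) (b, y) := by
  rintro ⟨c, z⟩ hadj
  rcases hadj with ⟨hac, hxz⟩ | ⟨hxv', -, -⟩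
  · simp only at hac hxz
    subst hac
    by_cases hab : b = a
    · subst hab
      have hyx : y ≠ x := fun h => hne (by rw [h])
      rw [rp_dist_same hG hT, rp_dist_same hG hT]
      have h1 : T.dist y x = T.dist y z + 1 := leaf_dist hT hx hxz hyx
      have h2 : T.dist x y = T.dist y x := SimpleGraph.dist_comm
      omega
    · rw [rp_dist_cross hG hT hab, rp_dist_cross hG hT (fun h => hab h.symm)]
      have h1 : T.dist v x = T.dist v z + 1 := leaf_dist hT hx hxz (fun h => hxv h.symm)
      have h2 : T.dist y v = T.dist v y := SimpleGraph.dist_comm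
      have h3 : G.dist b a = G.dist a b := SimpleGraph.dist_comm
      have h4 : T.dist x v = T.dist v x := SimpleGraph.dist_comm
      omega
  · exact absurd hxv' hxv

lemma mmd_LF [Nonempty α] (hcard : 2 ≤ Fintype.card β) {p q : α × β}
    (hp : p ∈ LF α T v) (hq : q ∈ LF α T v) (hpq : p ≠ q) :
    MMD (rootedProd G T v) p q := by
  obtain ⟨a, x⟩ := p
  obtain ⟨b, y⟩ := q
  exact ⟨maxd_leaf hG hT hcard (mem_LF.mp hp).1 (mem_LF.mp hp).2 hpq,
    maxd_leaf hG hT hcard (mem_LF.mp hq).1 (mem_LF.mp hq).2 hpq.symm⟩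

omit hG hT in
lemma resolver_eq {V : Type*} {H : SimpleGraph V} (hH : H.Connected) {u w z : V}
    (hmmd : MMD H u w) (huw : u ≠ w) (hres : StronglyResolves H z u w) :
    z = u ∨ z = w := by
  by_contra hcon
  push_neg at hcon
  obtain ⟨hzu, hzw⟩ := hcon
  have hwu : 1 ≤ H.dist w u := hH.pos_dist_of_ne (Ne.symm huw)
  rcases hres with h | h
  · -- d z u = d z w + d w u ; contradiction with w maximally distant from u
    have hzw1 : 1 ≤ H.dist w z := hH.pos_dist_of_ne (fun he => hzw he.symm)
    obtain ⟨W, hW⟩ := hH.exists_walk_length_eq_dist w z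
    cases W with
    | nil => simp at hW; omega
    | @cons _ s _ hadj W' =>
      have hs : H.dist s z ≤ W'.length := SimpleGraph.dist_le W'
      have hlen : W'.length + 1 = H.dist w z := hW
      have hmax : H.dist u s ≤ H.dist w u := hmmd.2 s hadj
      have htri : H.dist z u ≤ H.dist z s + H.dist s u := hH.dist_triangle
      have c1 : H.dist z s = H.dist s z := SimpleGraph.dist_comm
      have c2 : H.dist s u = H.dist u s := SimpleGraph.dist_comm
      have c3 : H.dist z w = H.dist w z := SimpleGraph.dist_comm
      omega
  · have hzu1 : 1 ≤ H.dist u z := hH.pos_dist_of_ne (fun he => hzu he.symm)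
    have huw1 : 1 ≤ H.dist u w := hH.pos_dist_of_ne huw
    obtain ⟨W, hW⟩ := hH.exists_walk_length_eq_dist u z
    cases W with
    | nil => simp at hW; omega
    | @cons _ s _ hadj W' =>
      have hs : H.dist s z ≤ W'.length := SimpleGraph.dist_le W'
      have hlen : W'.length + 1 = H.dist u z := hW
      have hmax : H.dist w s ≤ H.dist u w := hmmd.1 s hadj
      have htri : H.dist z w ≤ H.dist z s + H.dist s w := hH.dist_triangle
      have c1 : H.dist z s = H.dist s z := SimpleGraph.dist_comm
      have c2 : H.dist s w = H.dist w s := SimpleGraph.dist_comm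
      have c3 : H.dist z u = H.dist u z := SimpleGraph.dist_comm
      omega

lemma lower_bound [Nonempty α] (hcard : 2 ≤ Fintype.card β) (S : Finset (α × β))
    (hS : IsStrongGenerator (rootedProd G T v) (S : Set (α × β))) :
    (LF α T v).card - 1 ≤ S.card := by
  classical
  have hle : (LF α T v \ S).card ≤ 1 := by
    rw [Finset.card_le_one]
    intro p hp q hq
    by_contra hpq
    obtain ⟨z, hzS, hres⟩ := hS p q hpq
    have hmmd := mmd_LF hG hT hcard (Finset.mem_sdiff.mp hp).1 (Finset.mem_sdiff.mp hq).1 hpq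
    rcases resolver_eq (rp_connected hG hT) hmmd hpq hres with rfl | rfl
    · exact (Finset.mem_sdiff.mp hp).2 hzS
    · exact (Finset.mem_sdiff.mp hq).2 hzS
  have h1 := Finset.card_sdiff_add_card_inter (LF α T v) S
  have h2 : ((LF α T v) ∩ S).card ≤ S.card := Finset.card_le_card (Finset.inter_subset_right)
  omega

lemma upper_gen [Nonempty α] (h2 : 2 ≤ Fintype.card α) (hTn : 2 ≤ Fintype.card β)
    (z₀ : α × β) :
    IsStrongGenerator (rootedProd G T v)
      (((LF α T v).erase z₀ : Finset (α × β)) : Set (α × β)) := by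
  have hntα : Nontrivial α := Fintype.one_lt_card_iff_nontrivial.mp h2
  intro u u' huu
  have pick : ∀ w₁ w₂ : α × β, w₁ ∈ LF α T v → w₂ ∈ LF α T v → w₁ ≠ w₂ →
      StronglyResolves (rootedProd G T v) w₁ u u' →
      StronglyResolves (rootedProd G T v) w₂ u u' →
      ∃ w ∈ (((LF α T v).erase z₀ : Finset (α × β)) : Set (α × β)),
        StronglyResolves (rootedProd G T v) w u u' := by
    intro w₁ w₂ h1 h2' hne r1 r2
    by_cases hz : w₁ = z₀
    · refine ⟨w₂, ?_, r2⟩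
      simp only [Finset.coe_erase, Set.mem_diff, Finset.mem_coe, Set.mem_singleton_iff]
      exact ⟨h2', fun h => hne (hz.trans h.symm)⟩
    · refine ⟨w₁, ?_, r1⟩
      simp only [Finset.coe_erase, Set.mem_diff, Finset.mem_coe, Set.mem_singleton_iff]
      exact ⟨h1, hz⟩
  obtain ⟨a, x⟩ := u
  obtain ⟨b, y⟩ := u'
  by_cases hab : a = b
  · subst hab
    have hxy : x ≠ y := fun h => huu (by rw [h])
    obtain ⟨l₁, hl₁, he₁⟩ := exists_leaf_beyond hT hTn y x
    obtain ⟨l₂, hl₂, he₂⟩ := exists_leaf_beyond hT hTn x y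
    have hcomm : T.dist x y = T.dist y x := SimpleGraph.dist_comm
    have hxy1 : 1 ≤ T.dist y x := hT.isConnected.pos_dist_of_ne (Ne.symm hxy)
    have hne12 : l₁ ≠ l₂ := by
      intro h
      rw [h] at he₁
      omega
    have res₁ : StronglyResolves (rootedProd G T v) (a, l₁) (a, x) (a, y) := by
      right
      rw [rp_dist_same hG hT, rp_dist_same hG hT, rp_dist_same hG hT]
      have c1 : T.dist l₁ y = T.dist y l₁ := SimpleGraph.dist_comm
      have c2 : T.dist l₁ x = T.dist x l₁ := SimpleGraph.dist_comm
      omega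
    have res₂ : StronglyResolves (rootedProd G T v) (a, l₂) (a, x) (a, y) := by
      left
      rw [rp_dist_same hG hT, rp_dist_same hG hT, rp_dist_same hG hT]
      have c1 : T.dist l₂ y = T.dist y l₂ := SimpleGraph.dist_comm
      have c2 : T.dist l₂ x = T.dist x l₂ := SimpleGraph.dist_comm
      omega
    obtain ⟨c, hc⟩ := exists_ne a
    obtain ⟨m, hm, hmv⟩ := exists_leaf_ne hT hTn v
    have hmemm : (c, m) ∈ LF α T v := mem_LF.mpr ⟨hm, hmv⟩
    by_cases hv1 : l₁ = v
    · have hv2 : l₂ ≠ v := fun h => hne12 (hv1.trans h.symm)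
      have res₃ : StronglyResolves (rootedProd G T v) (c, m) (a, x) (a, y) := by
        right
        rw [rp_dist_cross hG hT hc, rp_dist_cross hG hT hc, rp_dist_same hG hT]
        have c1 : T.dist v y = T.dist y v := SimpleGraph.dist_comm
        have c2 : T.dist v x = T.dist x v := SimpleGraph.dist_comm
        have c3 : T.dist x l₁ = T.dist l₁ x := SimpleGraph.dist_comm
        rw [hv1] at he₁
        omega
      exact pick (c, m) (a, l₂) hmemm (mem_LF.mpr ⟨hl₂, hv2⟩)
        (fun h => hc (congrArg Prod.fst h)) res₃ res₂
    · by_cases hv2 : l₂ = v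
      · have res₃ : StronglyResolves (rootedProd G T v) (c, m) (a, x) (a, y) := by
          left
          rw [rp_dist_cross hG hT hc, rp_dist_cross hG hT hc, rp_dist_same hG hT]
          have c1 : T.dist v y = T.dist y v := SimpleGraph.dist_comm
          have c2 : T.dist v x = T.dist x v := SimpleGraph.dist_comm
          rw [hv2] at he₂
          omega
        exact pick (c, m) (a, l₁) hmemm (mem_LF.mpr ⟨hl₁, hv1⟩)
          (fun h => hc (congrArg Prod.fst h)) res₃ res₁
      · exact pick (a, l₁) (a, l₂) (mem_LF.mpr ⟨hl₁, hv1⟩) (mem_LF.mpr ⟨hl₂, hv2⟩)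
          (fun h => hne12 (congrArg Prod.snd h)) res₁ res₂
  · obtain ⟨la, hla, hlav, hea⟩ := exists_leaf_beyond' hT hTn v x
    obtain ⟨lb, hlb, hlbv, heb⟩ := exists_leaf_beyond' hT hTn v y
    have resa : StronglyResolves (rootedProd G T v) (a, la) (a, x) (b, y) := by
      right
      rw [rp_dist_cross hG hT hab, rp_dist_cross hG hT hab, rp_dist_same hG hT]
      have c1 : T.dist la v = T.dist v la := SimpleGraph.dist_comm
      have c2 : T.dist x v = T.dist v x := SimpleGraph.dist_comm
      have c3 : T.dist la x = T.dist x la := SimpleGraph.dist_comm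
      omega
    have resb : StronglyResolves (rootedProd G T v) (b, lb) (a, x) (b, y) := by
      left
      have hba : b ≠ a := fun h => hab h.symm
      rw [rp_dist_cross hG hT hba, rp_dist_same hG hT, rp_dist_cross hG hT hba]
      have c1 : T.dist lb v = T.dist v lb := SimpleGraph.dist_comm
      have c2 : T.dist y v = T.dist v y := SimpleGraph.dist_comm
      have c3 : T.dist lb y = T.dist y lb := SimpleGraph.dist_comm
      have c4 : G.dist b a = G.dist a b := SimpleGraph.dist_comm
      omega
    exact pick (a, la) (b, lb) (mem_LF.mpr ⟨hla, hlav⟩) (mem_LF.mpr ⟨hlb, hlbv⟩)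
      (fun h => hab (congrArg Prod.fst h)) resa resb

lemma sdim_eq [Nonempty α] (h2 : 2 ≤ Fintype.card α) (hTn : 2 ≤ Fintype.card β) :
    sdim (rootedProd G T v) = (LF α T v).card - 1 := by
  obtain ⟨m, hm, hmv⟩ := exists_leaf_ne hT hTn v
  have a₀ : α := Classical.arbitrary α
  have hz₀ : (a₀, m) ∈ LF α T v := mem_LF.mpr ⟨hm, hmv⟩
  have hcard : ((LF α T v).erase (a₀, m)).card = (LF α T v).card - 1 :=
    Finset.card_erase_of_mem hz₀
  have hmem : (LF α T v).card - 1 ∈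
      {k | ∃ S : Finset (α × β), S.card = k ∧
        IsStrongGenerator (rootedProd G T v) (S : Set (α × β))} :=
    ⟨(LF α T v).erase (a₀, m), hcard, upper_gen hG hT h2 hTn (a₀, m)⟩
  refine le_antisymm (Nat.sInf_le hmem) ?_
  have hnonempty : {k | ∃ S : Finset (α × β), S.card = k ∧
      IsStrongGenerator (rootedProd G T v) (S : Set (α × β))}.Nonempty := ⟨_, hmem⟩
  obtain ⟨S, hScard, hSgen⟩ := Nat.sInf_mem hnonempty
  rw [sdim, ← hScard]
  exact lower_bound hG hT hTn S hSgen

end MainPart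

theorem statement7 {α β : Type*} [Fintype α] [Fintype β]
    (G : SimpleGraph α) (T : SimpleGraph β)
    (hG : G.Connected) (hT : T.IsTree)
    {n : ℕ} (hn : Fintype.card α = n) (h2 : 2 ≤ n) (hTn : 2 ≤ Fintype.card β)
    (v : β) (l : ℕ) (hl : l = {x : β | (T.neighborSet x).ncard = 1}.ncard) :
    ((T.neighborSet v).ncard = 1 →
      (sdim (rootedProd G T v) : ℤ) = n * ((l : ℤ) - 1) - 1) ∧
    ((T.neighborSet v).ncard ≠ 1 →
      (sdim (rootedProd G T v) : ℤ) = n * (l : ℤ) - 1) := by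
  classical
  subst hn
  have hα : Nonempty α := Fintype.card_pos_iff.mp (by omega)
  have hsdim : sdim (rootedProd G T v) = (LF α T v).card - 1 := sdim_eq hG hT h2 hTn
  have hLFcard : (LF α T v).card = Fintype.card α * (leafF T v).card := by
    rw [LF, Finset.card_product, Finset.card_univ]
  set lf : Finset β := Finset.univ.filter (fun x => (T.neighborSet x).ncard = 1) with hlf
  have hlcard : l = lf.card := by
    rw [hl, Set.ncard_eq_toFinset_card']
    congr 1
    ext z
    simp [hlf, Set.mem_toFinset]
  obtain ⟨m, hm, hmv⟩ := exists_leaf_ne hT hTn v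
  have hleafF_nonempty : 1 ≤ (leafF T v).card := by
    have : m ∈ leafF T v := by
      simp only [leafF, Finset.mem_filter, Finset.mem_univ, true_and]
      exact ⟨hm, hmv⟩
    exact Finset.card_pos.mpr ⟨m, this⟩
  constructor
  · intro hv
    have hEq : leafF T v = lf.erase v := by
      ext z
      simp only [leafF, Finset.mem_filter, Finset.mem_univ, true_and, Finset.mem_erase, hlf]
      tauto
    have hvlf : v ∈ lf := by
      simp only [hlf, Finset.mem_filter, Finset.mem_univ, true_and]
      exact hv
    have hcard2 : (leafF T v).card = l - 1 := by
      rw [hEq, Finset.card_erase_of_mem hvlf, hlcard]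
    have hl2 : 2 ≤ l := by
      rw [hcard2] at hleafF_nonempty
      omega
    have h1 : 1 ≤ Fintype.card α * (l - 1) := by
      have := Nat.mul_le_mul h2 (by omega : 1 ≤ l - 1)
      omega
    rw [hsdim, hLFcard, hcard2]
    have e1 : ((Fintype.card α * (l - 1) - 1 : ℕ) : ℤ)
        = ((Fintype.card α * (l - 1) : ℕ) : ℤ) - 1 := by
      rw [Nat.cast_sub h1]; norm_num
    rw [e1, Nat.cast_mul, Nat.cast_sub (by omega : 1 ≤ l)]
    norm_num
  · intro hv
    have hEq : leafF T v = lf := by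
      ext z
      simp only [leafF, Finset.mem_filter, Finset.mem_univ, true_and, hlf]
      constructor
      · tauto
      · intro hz
        exact ⟨hz, fun h => hv (h ▸ hz)⟩
    have hcard2 : (leafF T v).card = l := by rw [hEq, hlcard]
    have hl1 : 1 ≤ l := by omega
    have h1 : 1 ≤ Fintype.card α * l := by
      have := Nat.mul_le_mul h2 hl1
      omega
    rw [hsdim, hLFcard, hcard2]
    rw [Nat.cast_sub h1, Nat.cast_mul]
    norm_num

end RootedStrong
end
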